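/- arXiv:1904.02893 — 3 statements merged into one kernel-verified Lean document; each statement's English description precedes it below -/
import Mathlib

section
/- Let A be a p×p real companion matrix with last row (a_p, a_{p-1}, ..., a_1) (i.e., A has ones on the superdiagonal, last row given by the coefficients, zeros elsewhere), and suppose the polynomial 1 - Σ_{k=1}^p a_k z^k has no complex root in the closed unit disk. Then Σ_{k≥0} e_p^T A^k e_p ≠ 0, where e_p is the p-th standard basis vector of ℝ^p. -/
open Filter Matrix
open scoped NNReal ENNReal

/-- Companion matrix with ones on the superdiagonal and last row
`(a_p, a_{p-1}, ..., a_1)`, where `a k` stands for `a_{k+1}`. -/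
def companion (p : ℕ) (a : ℕ → ℝ) : Matrix (Fin p) (Fin p) ℝ :=
  fun i j => if i.val = p - 1 then a (p - 1 - j.val) else if j.val = i.val + 1 then 1 else 0

attribute [local instance] Matrix.linftyOpNormedRing Matrix.linftyOpNormedAlgebra

namespace CompanionAux

variable (p : ℕ) (a : ℕ → ℝ)

noncomputable def B : Matrix (Fin p) (Fin p) ℂ :=
  (companion p a).map Complex.ofReal

lemma B_apply (i j : Fin p) :
    B p a i j = if i.val = p - 1 then (a (p - 1 - j.val) : ℂ)
      else if j.val = i.val + 1 then 1 else 0 := by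
  simp [B, companion, Matrix.map_apply, apply_ite Complex.ofReal]

lemma B_pow (n : ℕ) : (B p a) ^ n = ((companion p a) ^ n).map Complex.ofReal := by
  have : B p a = Complex.ofRealHom.mapMatrix (companion p a) := rfl
  rw [this, ← map_pow]
  rfl

/-- row computation for non-last rows -/
lemma mulVec_row (w : Fin p → ℂ) (i : Fin p) (hne : i.val ≠ p - 1) (h : i.val + 1 < p) :
    (B p a *ᵥ w) i = w ⟨i.val + 1, h⟩ := by
  have : ∀ j : Fin p, B p a i j = if j = ⟨i.val + 1, h⟩ then 1 else 0 := by
    intro j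
    rw [B_apply]
    simp only [hne, if_false]
    congr 1
    simp [Fin.ext_iff]
  simp only [Matrix.mulVec, dotProduct, this]
  simp

/-- row computation for the last row -/
lemma mulVec_last (w : Fin p → ℂ) (i : Fin p) (hi : i.val = p - 1) :
    (B p a *ᵥ w) i = ∑ j : Fin p, (a (p - 1 - j.val) : ℂ) * w j := by
  simp only [Matrix.mulVec, dotProduct, B_apply, hi, if_true]

/-- Every element of the spectrum has norm < 1. -/
lemma spec_lt (hp : 0 < p)
    (hS : ∀ z : ℂ, ‖z‖ ≤ 1 →
      (1 : ℂ) - ∑ k ∈ Finset.range p, (a k : ℂ) * z ^ (k + 1) ≠ 0) :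
    ∀ μ ∈ spectrum ℂ (B p a), ‖μ‖₊ < 1 := by
  intro μ hμ
  by_contra hge
  push_neg at hge
  have hμ0 : μ ≠ 0 := by
    intro h; rw [h] at hge; simp at hge
  -- get eigenvector
  rw [spectrum.mem_iff] at hμ
  have hdet : (algebraMap ℂ (Matrix (Fin p) (Fin p) ℂ) μ - B p a).det = 0 := by
    by_contra hd
    exact hμ ((Matrix.isUnit_iff_isUnit_det _).2 (isUnit_iff_ne_zero.2 hd))
  obtain ⟨v, hv0, hv⟩ := (Matrix.exists_mulVec_eq_zero_iff).2 hdet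
  have heig : B p a *ᵥ v = μ • v := by
    have h1 : (algebraMap ℂ (Matrix (Fin p) (Fin p) ℂ) μ - B p a) *ᵥ v
        = μ • v - B p a *ᵥ v := by
      rw [Matrix.sub_mulVec, Algebra.algebraMap_eq_smul_one, Matrix.smul_mulVec,
        Matrix.one_mulVec]
    rw [h1] at hv
    exact (sub_eq_zero.mp hv).symm
  -- eigenvector structure
  have hstep : ∀ (m : ℕ) (h : m + 1 < p), v ⟨m + 1, h⟩ = μ * v ⟨m, by omega⟩ := by
    intro m h
    have hne : ((⟨m, by omega⟩ : Fin p) : ℕ) ≠ p - 1 := by simp; omega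
    have hrow := mulVec_row p a v ⟨m, by omega⟩ hne h
    rw [heig] at hrow
    simpa using hrow.symm
  have hpow : ∀ (m : ℕ) (h : m < p), v ⟨m, h⟩ = μ ^ m * v ⟨0, hp⟩ := by
    intro m
    induction m with
    | zero => intro h; simp
    | succ k ih =>
      intro h
      rw [hstep k h, ih (by omega), pow_succ]
      ring
  have hv00 : v ⟨0, hp⟩ ≠ 0 := by
    intro h0
    apply hv0
    funext i
    have := hpow i.val i.isLt
    rw [h0, mul_zero] at this
    simpa using this
  have hlast := mulVec_last p a v ⟨p - 1, by omega⟩ rfl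
  rw [heig] at hlast
  have hsum1 : ∑ j : Fin p, (a (p - 1 - j.val) : ℂ) * v j
      = (∑ j ∈ Finset.range p, (a (p - 1 - j) : ℂ) * μ ^ j) * v ⟨0, hp⟩ := by
    rw [Finset.sum_mul,
      ← Fin.sum_univ_eq_sum_range (fun j => (a (p - 1 - j) : ℂ) * μ ^ j * v ⟨0, hp⟩) p]
    apply Finset.sum_congr rfl
    intro j _
    have := hpow j.val j.isLt
    simp only [Fin.eta] at this
    rw [this]; ring
  have hvq : v ⟨p - 1, by omega⟩ = μ ^ (p - 1) * v ⟨0, hp⟩ := hpow (p - 1) (by omega)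
  have key0 : (∑ j ∈ Finset.range p, (a (p - 1 - j) : ℂ) * μ ^ j) = μ ^ p := by
    apply mul_right_cancel₀ hv00
    rw [← hsum1, ← hlast]
    simp only [Pi.smul_apply, smul_eq_mul]
    rw [hvq, ← mul_assoc, ← pow_succ']
    congr 2
    omega
  have key : (∑ k ∈ Finset.range p, (a k : ℂ) * μ ^ (p - 1 - k)) = μ ^ p := by
    have hrefl := Finset.sum_range_reflect (fun j => (a (p - 1 - j) : ℂ) * μ ^ j) p
    rw [key0] at hrefl
    rw [← hrefl]
    apply Finset.sum_congr rfl
    intro k hk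
    rw [Finset.mem_range] at hk
    have h1 : p - 1 - (p - 1 - k) = k := by omega
    rw [h1]
  -- contradiction with hS
  have habs : ‖μ⁻¹‖ ≤ 1 := by
    rw [norm_inv]
    apply inv_le_one_of_one_le₀
    have : (1 : ℝ≥0) ≤ ‖μ‖₊ := hge
    exact_mod_cast this
  apply hS μ⁻¹ habs
  rw [sub_eq_zero]
  symm
  have hterm : ∀ k ∈ Finset.range p, (a k : ℂ) * (μ⁻¹) ^ (k + 1)
      = (a k : ℂ) * μ ^ (p - 1 - k) * (μ ^ p)⁻¹ := by
    intro k hk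
    rw [Finset.mem_range] at hk
    rw [inv_pow, mul_assoc]
    congr 1
    have hpk : p - 1 - k + (k + 1) = p := by omega
    field_simp
    rw [← pow_add, show k + 1 + (p - 1 - k) = p by omega]
  rw [Finset.sum_congr rfl hterm, ← Finset.sum_mul, key, mul_inv_cancel₀ (pow_ne_zero p hμ0)]

lemma entry_norm_le (M : Matrix (Fin p) (Fin p) ℂ) (i j : Fin p) : ‖M i j‖ ≤ ‖M‖ := by
  have h : ‖M i j‖₊ ≤ ‖M‖₊ := by
    rw [Matrix.linfty_opNNNorm_def]
    calc ‖M i j‖₊ ≤ ∑ j' : Fin p, ‖M i j'‖₊ :=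
          Finset.single_le_sum (f := fun j' => ‖M i j'‖₊) (fun x _ => (zero_le : (0:ℝ≥0) ≤ ‖M i x‖₊)) (Finset.mem_univ j)
      _ ≤ _ := Finset.le_sup (f := fun i => ∑ j' : Fin p, ‖M i j'‖₊) (Finset.mem_univ i)
  exact_mod_cast h

lemma summable_entry (hp : 0 < p)
    (hS : ∀ z : ℂ, ‖z‖ ≤ 1 →
      (1 : ℂ) - ∑ k ∈ Finset.range p, (a k : ℂ) * z ^ (k + 1) ≠ 0)
    (i j : Fin p) : Summable fun n : ℕ => ((B p a) ^ n) i j := by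
  haveI : NeZero p := ⟨hp.ne'⟩
  have hrad : spectralRadius ℂ (B p a) < 1 := by
    have := spectrum.spectralRadius_lt_of_forall_lt (a := B p a) (r := 1)
      (spec_lt p a hp hS)
    simpa using this
  obtain ⟨r, hr1, hr2⟩ := exists_between hrad
  have hrtop : r ≠ ⊤ := ne_top_of_lt (hr2.trans_le le_top)
  have hten := spectrum.pow_nnnorm_pow_one_div_tendsto_nhds_spectralRadius (B p a)
  have hev : ∀ᶠ n : ℕ in atTop, (‖(B p a) ^ n‖₊ : ℝ≥0∞) ^ (1 / (n : ℝ)) < r :=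
    hten.eventually_lt_const hr1
  have hev2 : ∀ᶠ n : ℕ in atTop, (‖(B p a) ^ n‖₊ : ℝ≥0∞) ≤ r ^ n := by
    filter_upwards [hev, eventually_ge_atTop 1] with n hn hn1
    have hn0 : (n : ℝ) ≠ 0 := by positivity
    have h0 : ((‖(B p a) ^ n‖₊ : ℝ≥0∞) ^ (1 / (n : ℝ))) ^ (n : ℝ) ≤ r ^ (n : ℝ) :=
      ENNReal.rpow_le_rpow hn.le (by positivity)
    rw [← ENNReal.rpow_mul, one_div, inv_mul_cancel₀ hn0, ENNReal.rpow_one,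
      ENNReal.rpow_natCast r n] at h0
    exact h0
  set c : ℝ≥0 := r.toNNReal with hc
  have hc1 : c < 1 := by
    have : (c : ℝ≥0∞) < 1 := by rw [hc, ENNReal.coe_toNNReal hrtop]; exact hr2
    exact_mod_cast this
  have hgeom : Summable fun n : ℕ => (c : ℝ) ^ n :=
    summable_geometric_of_lt_one c.coe_nonneg hc1
  apply Summable.of_norm_bounded_eventually hgeom
  rw [Nat.cofinite_eq_atTop]
  filter_upwards [hev2] with n hn
  have h1 : ‖(B p a) ^ n‖₊ ≤ c ^ n := by
    rw [← ENNReal.coe_le_coe, ENNReal.coe_pow, hc, ENNReal.coe_toNNReal hrtop]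
    exact hn
  calc ‖((B p a) ^ n) i j‖ ≤ ‖(B p a) ^ n‖ := entry_norm_le p _ i j
    _ ≤ (c : ℝ) ^ n := by exact_mod_cast h1

end CompanionAux

/-- If `1 - Σ_{k=1}^p a_k z^k` has no complex root in the closed unit disk, then
`Σ_{k≥0} e_p^T A^k e_p ≠ 0` for the companion matrix `A`. -/
theorem stmt0 (p : ℕ) (hp : 0 < p) (a : ℕ → ℝ)
    (hS : ∀ z : ℂ, ‖z‖ ≤ 1 →
      (1 : ℂ) - ∑ k ∈ Finset.range p, (a k : ℂ) * z ^ (k + 1) ≠ 0) :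
    (∑' n : ℕ, ((companion p a) ^ n) ⟨p - 1, by omega⟩ ⟨p - 1, by omega⟩) ≠ 0 := by
  intro hcontra
  have hsum := fun i j => CompanionAux.summable_entry p a hp hS i j
  set Bm := CompanionAux.B p a with hBm
  set q : Fin p := ⟨p - 1, by omega⟩ with hq
  set v : Fin p → ℂ := fun i => ∑' n : ℕ, (Bm ^ n) i q with hv
  have hBv : ∀ i : Fin p, (Bm *ᵥ v) i = v i - if i = q then 1 else 0 := by
    intro i
    have e1 : (Bm *ᵥ v) i = ∑ j : Fin p, ∑' n : ℕ, Bm i j * ((Bm ^ n) j q) := by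
      simp only [Matrix.mulVec, dotProduct, hv]
      exact Finset.sum_congr rfl fun j _ => (tsum_mul_left).symm
    rw [e1, ← Summable.tsum_finsetSum (fun j _ => (hsum j q).mul_left _)]
    have e2 : ∀ n : ℕ, (∑ j : Fin p, Bm i j * (Bm ^ n) j q) = (Bm ^ (n + 1)) i q := by
      intro n
      rw [pow_succ', Matrix.mul_apply]
    rw [tsum_congr e2]
    have e3 : v i = (Bm ^ 0) i q + ∑' n : ℕ, (Bm ^ (n + 1)) i q :=
      Summable.tsum_eq_zero_add (hsum i q)
    have e4 : (Bm ^ 0) i q = if i = q then 1 else 0 := by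
      rw [pow_zero, Matrix.one_apply]
    rw [e3, e4]
    ring
  have hvq : v q = 0 := by
    have hcoe : v q = ((∑' n : ℕ, ((companion p a) ^ n) q q : ℝ) : ℂ) := by
      rw [Complex.ofReal_tsum]
      apply tsum_congr
      intro n
      rw [hBm, CompanionAux.B_pow]
      rfl
    have h0 : (∑' n : ℕ, ((companion p a) ^ n) q q : ℝ) = 0 := hcontra
    rw [hcoe, h0, Complex.ofReal_zero]
  have hconst : ∀ i : Fin p, ∀ h : i.val + 1 < p, v i = v ⟨i.val + 1, h⟩ := by
    intro i h
    have hne : (i : ℕ) ≠ p - 1 := by omega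
    have hrow := CompanionAux.mulVec_row p a v i hne h
    have hBv' := hBv i
    rw [hrow, if_neg (fun hiq => hne (by rw [hiq]))] at hBv'
    rw [hBv']
    ring
  have hup : ∀ k : ℕ, ∀ h : p - 1 - k < p, v ⟨p - 1 - k, h⟩ = 0 := by
    intro k
    induction k with
    | zero =>
      intro h
      have he : (⟨p - 1 - 0, h⟩ : Fin p) = q := Fin.mk_eq_mk.mpr (by omega)
      rw [he]; exact hvq
    | succ k ih =>
      intro h
      by_cases hk : k + 1 ≤ p - 1
      · have h2 : (p - 1 - (k + 1)) + 1 < p := by omega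
        rw [hconst ⟨p - 1 - (k + 1), h⟩ h2]
        have he : (⟨p - 1 - (k + 1) + 1, h2⟩ : Fin p) = ⟨p - 1 - k, by omega⟩ :=
          Fin.mk_eq_mk.mpr (by omega)
        rw [he]; exact ih (by omega)
      · have he : (⟨p - 1 - (k + 1), h⟩ : Fin p) = ⟨p - 1 - k, by omega⟩ :=
          Fin.mk_eq_mk.mpr (by omega)
        rw [he]; exact ih (by omega)
  have hvz : v = 0 := by
    funext i
    have hi := i.isLt
    have he : i = ⟨p - 1 - (p - 1 - i.val), by omega⟩ := Fin.ext (by simp; omega)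
    rw [he]
    exact hup (p - 1 - i.val) (by omega)
  have hfinal := hBv q
  rw [hvz, if_pos rfl] at hfinal
  simp at hfinal
end

section
/- Let (a_1,...,a_p) be such that the polynomial 1 - Σ_{k=1}^p a_k z^k has no zero in the closed unit disk. Then for every absolutely summable real sequence (y_t)_{t∈ℤ}, there is a unique absolutely summable real sequence (x_t)_{t∈ℤ} satisfying x_t = Σ_{k=1}^p a_k x_{t-k} + Σ_{k=1}^q b_k y_{t+1-k} for all t ∈ ℤ. -/
open scoped ENNReal

noncomputable section

abbrev Eℓ : Type := lp (fun _ : ℤ => ℂ) 1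

lemma memℓp_one_iff' {f : ℤ → ℂ} : Memℓp f 1 ↔ Summable fun t => ‖f t‖ := by
  rw [memℓp_gen_iff (by norm_num)]
  simp

lemma norm_eqE (f : Eℓ) : ‖f‖ = ∑' t, ‖f t‖ := by
  have := lp.norm_eq_tsum_rpow (p := (1:ℝ≥0∞)) (by norm_num) f
  simpa using this

def shiftL : Eℓ →L[ℂ] Eℓ := by
  refine LinearMap.mkContinuous
    { toFun := fun f => ⟨fun t => f (t - 1), ?_⟩
      map_add' := ?_
      map_smul' := ?_ } 1 ?_
  · show Memℓp _ 1
    rw [memℓp_one_iff']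
    exact ((Equiv.subRight (1:ℤ)).summable_iff
      (f := fun t => ‖f t‖)).2 (memℓp_one_iff'.1 (lp.memℓp f))
  · intro f g; ext t; simp [lp.coeFn_add, Pi.add_apply]; rfl
  · intro c f; ext t; simp [lp.coeFn_smul, Pi.smul_apply]
  · intro f
    rw [one_mul]
    apply le_of_eq
    rw [norm_eqE, norm_eqE]
    exact (Equiv.subRight (1:ℤ)).tsum_eq (f := fun t => ‖f t‖)

lemma shiftL_apply (f : Eℓ) (t : ℤ) : shiftL f t = f (t - 1) := rfl

lemma shiftL_pow_apply (m : ℕ) (f : Eℓ) (t : ℤ) : (shiftL ^ m) f t = f (t - m) := by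
  induction m generalizing f t with
  | zero => simp
  | succ n ih =>
    rw [pow_succ']
    have : (shiftL * shiftL ^ n) f = shiftL ((shiftL ^ n) f) := rfl
    rw [this, shiftL_apply, ih]
    push_cast
    ring_nf

lemma norm_shiftL_le : ‖shiftL‖ ≤ 1 :=
  LinearMap.mkContinuous_norm_le _ zero_le_one _

instance : Nontrivial Eℓ := by
  refine ⟨0, lp.single 1 (0:ℤ) (1:ℂ), fun h => ?_⟩
  have := congrArg (fun f : Eℓ => f 0) h
  simp [lp.single_apply_self] at this

open Polynomial in
lemma armaIsUnitOp (p : ℕ) (a : ℕ → ℝ)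
    (hS : ∀ z : ℂ, ‖z‖ ≤ 1 →
      (1 : ℂ) - ∑ k ∈ Finset.range p, (a k : ℂ) * z ^ (k + 1) ≠ 0) :
    IsUnit ((1 : Eℓ →L[ℂ] Eℓ) - ∑ k ∈ Finset.range p, (a k : ℂ) • shiftL ^ (k + 1)) := by
  set Q : ℂ[X] := 1 - ∑ k ∈ Finset.range p, C (a k : ℂ) * X ^ (k + 1) with hQ
  have haev : aeval shiftL Q =
      (1 : Eℓ →L[ℂ] Eℓ) - ∑ k ∈ Finset.range p, (a k : ℂ) • shiftL ^ (k + 1) := by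
    simp [hQ, map_sum, Algebra.smul_def]
  rw [← haev]
  by_contra hnu
  have h0 : (0:ℂ) ∈ spectrum ℂ (aeval shiftL Q) := (spectrum.zero_mem_iff ℂ).2 hnu
  rw [spectrum.map_polynomial_aeval] at h0
  obtain ⟨z, hz, hev⟩ := h0
  have hz1 : ‖z‖ ≤ 1 := by
    have := spectrum.subset_closedBall_norm_mul shiftL hz
    simp only [Metric.mem_closedBall, dist_zero_right] at this
    calc ‖z‖ = ‖z‖ := rfl
      _ ≤ ‖shiftL‖ * ‖(1 : Eℓ →L[ℂ] Eℓ)‖ := this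
      _ ≤ 1 * 1 := by
          exact mul_le_mul norm_shiftL_le ContinuousLinearMap.norm_id_le (norm_nonneg _) zero_le_one
      _ = 1 := one_mul 1
  apply hS z hz1
  rw [← hev]
  simp [hQ, eval_finset_sum]

lemma memC {w : ℤ → ℝ} (hw : Summable fun t => |w t|) :
    Memℓp (fun t : ℤ => (w t : ℂ)) 1 := by
  rw [memℓp_one_iff']
  simpa [Complex.norm_real, Real.norm_eq_abs] using hw

lemma sumC (f : Eℓ) : Summable fun t : ℤ => ‖f t‖ := memℓp_one_iff'.1 (lp.memℓp f)

/-- If `1 - Σ_{k=1}^p a_k z^k` has no zero in the closed unit disk, then for every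
absolutely summable real sequence `(y_t)` there is a unique absolutely summable
solution of `x_t = Σ_{k=1}^p a_k x_{t-k} + Σ_{k=1}^q b_k y_{t+1-k}`. -/
theorem stmt4 (p q : ℕ) (a b : ℕ → ℝ)
    (hS : ∀ z : ℂ, ‖z‖ ≤ 1 →
      (1 : ℂ) - ∑ k ∈ Finset.range p, (a k : ℂ) * z ^ (k + 1) ≠ 0)
    (y : ℤ → ℝ) (hy : Summable fun t : ℤ => |y t|) :
    ∃! x : ℤ → ℝ, (Summable fun t : ℤ => |x t|) ∧
      ∀ t : ℤ, x t = (∑ k ∈ Finset.range p, a k * x (t - (k + 1)))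
        + ∑ k ∈ Finset.range q, b k * y (t - k) := by
  classical
  set u : Eℓ →L[ℂ] Eℓ :=
    (1 : Eℓ →L[ℂ] Eℓ) - ∑ k ∈ Finset.range p, (a k : ℂ) • shiftL ^ (k + 1) with hu
  have hunit : IsUnit u := armaIsUnitOp p a hS
  have hu_apply : ∀ (f : Eℓ) (t : ℤ),
      (u f) t = f t - ∑ k ∈ Finset.range p, (a k : ℂ) * f (t - (k + 1)) := by
    intro f t
    rw [hu]
    rw [ContinuousLinearMap.sub_apply, ContinuousLinearMap.sum_apply,
      ContinuousLinearMap.one_apply, lp.coeFn_sub]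
    simp only [Pi.sub_apply, lp.coeFn_sum, Finset.sum_apply]
    congr 1
    refine Finset.sum_congr rfl fun k _ => ?_
    rw [ContinuousLinearMap.smul_apply, lp.coeFn_smul, Pi.smul_apply,
      shiftL_pow_apply, smul_eq_mul]
    norm_cast
  set Y : Eℓ := ⟨fun t => (y t : ℂ), memC hy⟩ with hY
  set U : Eℓ := ∑ k ∈ Finset.range q, (b k : ℂ) • (shiftL ^ k) Y with hU
  have hU_apply : ∀ t : ℤ, U t = ∑ k ∈ Finset.range q, (b k : ℂ) * (y (t - k) : ℂ) := by
    intro t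
    rw [hU]
    simp only [lp.coeFn_sum, Finset.sum_apply]
    refine Finset.sum_congr rfl fun k _ => ?_
    rw [lp.coeFn_smul, Pi.smul_apply, shiftL_pow_apply, smul_eq_mul]
  set ui : Eℓ →L[ℂ] Eℓ := ↑hunit.unit⁻¹ with hui
  have hul : ui * u = 1 := hunit.val_inv_mul
  have hur : u * ui = 1 := hunit.mul_val_inv
  -- the complex solution
  set X : Eℓ := ui U with hX
  have huX : u X = U := by
    rw [hX, ← ContinuousLinearMap.mul_apply, hur, ContinuousLinearMap.one_apply]
  -- key: lifting real solutions
  have key : ∀ x : ℤ → ℝ, (Summable fun t : ℤ => |x t|) →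
      (∀ t : ℤ, x t = (∑ k ∈ Finset.range p, a k * x (t - (k + 1)))
        + ∑ k ∈ Finset.range q, b k * y (t - k)) →
      ∀ t, (x t : ℂ) = X t := by
    intro x hxs hxe
    set W : Eℓ := ⟨fun t => (x t : ℂ), memC hxs⟩ with hW
    have huW : u W = U := by
      apply lp.ext
      funext t
      rw [hu_apply, hU_apply]
      have : (W : ℤ → ℂ) = fun t => (x t : ℂ) := rfl
      simp only [this]
      rw [sub_eq_iff_eq_add]
      rw [hxe t]
      push_cast
      ring
    have : W = X := by
      rw [hX, ← huW, ← ContinuousLinearMap.mul_apply, hul, ContinuousLinearMap.one_apply]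
    intro t
    rw [← this]
  refine ⟨fun t => (X t).re, ⟨?_, ?_⟩, ?_⟩
  · refine Summable.of_nonneg_of_le (fun t => abs_nonneg _)
      (fun t => ?_) (sumC X)
    exact (Complex.abs_re_le_norm (X t)).trans (le_of_eq rfl)
  · intro t
    have h1 := hu_apply X t
    rw [huX, hU_apply] at h1
    have h2 : (X t : ℂ) = (∑ k ∈ Finset.range p, (a k : ℂ) * X (t - (k + 1)))
        + ∑ k ∈ Finset.range q, (b k : ℂ) * (y (t - k) : ℂ) := by
      linear_combination -h1
    have := congrArg Complex.re h2
    simpa [Complex.add_re, Complex.re_sum, Complex.re_ofReal_mul] using this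
  · intro x' ⟨hxs', hxe'⟩
    funext t
    have := key x' hxs' hxe' t
    have : (x' t : ℂ).re = (X t).re := by rw [← this]
    simpa using this

end
end

section
/- Suppose (a*_1,...,a*_p) ∈ S_p and the polynomials P_p(z) = z^p - Σ_{k=1}^p a*_k z^{p-k} and Q_q(z) = Σ_{k=0}^{q-1} b*_{k+1} z^{q-1-k} have no common complex root. Let A and A* be the (p+q-1)-square block matrices built from coefficients (a_1,...,a_p, b_2,...,b_q) and (a*_1,...,a*_p, b*_2,...,b*_q) respectively (as in the ODM state-space form, with b_1 = b*_1), and b* = b*_1 e_p + e_{p+q-1}. If (a_1,...,a_p) ∈ S_p and e_p^T (A^k - A*^k) b* = 0 for all k ≥ 1, then A = A*. -/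
/-- The stability set `S_p`: coefficient vectors `(a_1,...,a_p)` (with `a k`
standing for `a_{k+1}`) such that `1 - Σ_{k=1}^p a_k z^k` has no root in the
closed unit disk. -/
def memSp (p : ℕ) (a : ℕ → ℝ) : Prop :=
  ∀ z : ℂ, ‖z‖ ≤ 1 →
    (1 : ℂ) - ∑ k ∈ Finset.range p, (a k : ℂ) * z ^ (k + 1) ≠ 0

/-- The `(p+q-1)`-square state-space matrix of the LODM: row `p` (1-indexed) is
`(a_p,...,a_1,b_q,...,b_2)`, rows `1..p-1` and `p+1..p+q-2` are shift rows, the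
last row is zero.  Here `a k` stands for `a_{k+1}` and `b k` for `b_{k+1}`. -/
def bigA (p q : ℕ) (a b : ℕ → ℝ) : Matrix (Fin (p + q - 1)) (Fin (p + q - 1)) ℝ :=
  fun i j =>
    if i.val = p - 1 then
      (if j.val < p then a (p - 1 - j.val) else b (q - 1 - (j.val - p)))
    else if j.val = i.val + 1 then 1 else 0

/-- The vector `b̄ = b_1 e_p + e_{p+q-1}` of the LODM state-space form (reducing
to `b_1 e_p` when `q = 1`). -/
def bbar (p q : ℕ) (b1 : ℝ) : Fin (p + q - 1) → ℝ :=
  fun i => if i.val = p - 1 then b1 else if i.val = p + q - 2 then 1 else 0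

/-- The vector `ω̄ = ω e_p` of the LODM state-space form. -/
def omegabar (p q : ℕ) (ω : ℝ) : Fin (p + q - 1) → ℝ :=
  fun i => if i.val = p - 1 then ω else 0

open Finset Polynomial

namespace Stmt6

variable (p q : ℕ) (a b : ℕ → ℝ) (b1 : ℝ)

/-- state vector -/
def vv (k : ℕ) : Fin (p+q-1) → ℝ := ((bigA p q a b) ^ k).mulVec (bbar p q b1)

/-- scalar output sequence, with junk value if p = 0 -/
def hseq (k : ℕ) : ℝ :=
  if h : p - 1 < p + q - 1 then vv p q a b b1 k ⟨p-1, h⟩ else 0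

variable (hp : 0 < p) (hq : 0 < q)

include hp hq in
lemma hseq_eq (k : ℕ) : hseq p q a b b1 k = vv p q a b b1 k ⟨p-1, Nat.sub_lt_sub_right (by omega) (by omega)⟩ := by
  rw [hseq, dif_pos]

lemma vv_zero : vv p q a b b1 0 = bbar p q b1 := by
  simp [vv]

lemma vv_succ (k : ℕ) :
    vv p q a b b1 (k+1) = (bigA p q a b).mulVec (vv p q a b b1 k) := by
  rw [vv, pow_succ', ← Matrix.mulVec_mulVec]; rfl

lemma shift_row (i : Fin (p+q-1)) (hi : i.val ≠ p - 1) (w : Fin (p+q-1) → ℝ) :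
    (bigA p q a b).mulVec w i
      = if h : i.val + 1 < p + q - 1 then w ⟨i.val+1, h⟩ else 0 := by
  rw [Matrix.mulVec]
  show ∑ j, bigA p q a b i j * w j = _
  split_ifs with h
  · rw [Fintype.sum_eq_single (⟨i.val+1, h⟩ : Fin (p+q-1))]
    · simp [bigA, hi]
    · intro j hj
      have : j.val ≠ i.val + 1 := fun hc => hj (Fin.ext hc)
      simp [bigA, hi, this]
  · apply Finset.sum_eq_zero
    intro j _
    have : j.val ≠ i.val + 1 := by omega
    simp [bigA, hi, this]

include hp hq in
lemma hseq_zero : hseq p q a b b1 0 = b1 := by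
  rw [hseq_eq p q a b b1 hp hq, vv_zero, bbar, if_pos rfl]

include hp hq in
lemma vv_struct : ∀ k (j : ℕ) (hj : j < p + q - 1),
    (j < p → vv p q a b b1 k ⟨j, hj⟩
        = if p - 1 - j ≤ k then hseq p q a b b1 (k - (p-1-j)) else 0) ∧
    (p ≤ j → vv p q a b b1 k ⟨j, hj⟩ = if j + k = p + q - 2 then 1 else 0) := by
  intro k
  induction k with
  | zero =>
    intro j hj
    constructor
    · intro hjp
      rw [vv_zero, bbar, Nat.zero_sub, hseq_zero p q a b b1 hp hq]
      simp only [Fin.val_mk]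
      split_ifs <;> first | rfl | omega
    · intro hjp
      rw [vv_zero, bbar]
      simp only [Fin.val_mk]
      split_ifs <;> first | rfl | omega
  | succ k ih =>
    intro j hj
    constructor
    · intro hjp
      by_cases hje : j = p - 1
      · subst hje
        rw [if_pos (by omega), hseq_eq p q a b b1 hp hq]
        congr 1
        omega
      · rw [vv_succ, shift_row p q a b ⟨j, hj⟩ (show j ≠ p - 1 by omega),
            dif_pos (show j + 1 < p + q - 1 by omega)]
        rw [(ih (j+1) (by omega)).1 (by omega)]
        rw [show k - (p - 1 - (j+1)) = k + 1 - (p - 1 - j) by omega]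
        exact if_congr (by omega) rfl rfl
    · intro hjp
      rw [vv_succ, shift_row p q a b ⟨j, hj⟩ (show j ≠ p - 1 by omega)]
      by_cases h : j + 1 < p + q - 1
      · rw [dif_pos h, (ih (j+1) (by omega)).2 (by omega)]
        exact if_congr (by omega) rfl rfl
      · rw [dif_neg h, if_neg (by omega)]

include hp hq in
lemma hseq_succ (k : ℕ) :
    hseq p q a b b1 (k+1)
      = (∑ m ∈ range p, a m * (if m ≤ k then hseq p q a b b1 (k - m) else 0))
        + (if k + 1 ≤ q - 1 then b (k+1) else 0) := by
  rw [hseq_eq p q a b b1 hp hq, vv_succ, Matrix.mulVec]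
  show ∑ j, bigA p q a b _ j * vv p q a b b1 k j = _
  have key : ∀ j : Fin (p+q-1), bigA p q a b ⟨p-1, by omega⟩ j * vv p q a b b1 k j
      = (fun j : ℕ =>
          (if j < p then a (p-1-j) * (if p - 1 - j ≤ k then hseq p q a b b1 (k - (p-1-j)) else 0)
           else b (q-1-(j-p)) * (if j + k = p + q - 2 then 1 else 0))) j.val := by
    intro j
    simp only [bigA, Fin.val_mk, if_pos rfl, eq_self_iff_true, if_true]
    by_cases hjp : j.val < p
    · rw [if_pos hjp, if_pos hjp, (vv_struct p q a b b1 hp hq k j.val j.isLt).1 hjp]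
    · rw [if_neg hjp, if_neg hjp, (vv_struct p q a b b1 hp hq k j.val j.isLt).2 (by omega)]
  rw [Finset.sum_congr rfl (fun j _ => key j),
      Fin.sum_univ_eq_sum_range (fun j : ℕ =>
          (if j < p then a (p-1-j) * (if p - 1 - j ≤ k then hseq p q a b b1 (k - (p-1-j)) else 0)
           else b (q-1-(j-p)) * (if j + k = p + q - 2 then 1 else 0)))]

  rw [show p + q - 1 = p + (q-1) by omega, Finset.sum_range_add]
  congr 1
  · -- a-part
    rw [Finset.sum_congr rfl (fun j hj => if_pos (mem_range.mp hj))]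
    rw [← Finset.sum_range_reflect]
    apply Finset.sum_congr rfl
    intro m hm
    rw [mem_range] at hm
    rw [show p - 1 - (p - 1 - m) = m by omega]
  · -- b-part
    rw [Finset.sum_congr rfl (fun j hj => if_neg (by omega : ¬ p + j < p))]
    by_cases hk : k + 1 ≤ q - 1
    · rw [if_pos hk]
      rw [Finset.sum_eq_single (q - 2 - k)]
      · rw [if_pos (by omega), show q - 1 - (p + (q-2-k) - p) = k + 1 by omega, mul_one]
      · intro m hm hne
        rw [if_neg (by rw [mem_range] at hm; omega), mul_zero]
      · intro hm
        rw [mem_range] at hm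
        omega
    · rw [if_neg hk]
      apply Finset.sum_eq_zero
      intro m hm
      rw [mem_range] at hm
      rw [if_neg (by omega), mul_zero]


noncomputable def Ppoly (p : ℕ) (a : ℕ → ℝ) : Polynomial ℝ :=
  1 - ∑ m ∈ range p, C (a m) * X^(m+1)

noncomputable def Qpoly (q : ℕ) (b : ℕ → ℝ) : Polynomial ℝ :=
  ∑ m ∈ range q, C (b m) * X^m

noncomputable def Pc (p : ℕ) (a : ℕ → ℝ) : Polynomial ℂ :=
  X^p - ∑ k ∈ range p, C ((a k : ℂ)) * X^(p-1-k)

noncomputable def Qc (q : ℕ) (b : ℕ → ℝ) : Polynomial ℂ :=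
  ∑ k ∈ range q, C ((b k : ℂ)) * X^(q-1-k)

lemma coeff_Ppoly_zero : (Ppoly p a).coeff 0 = 1 := by
  rw [Ppoly, coeff_sub, coeff_one, finset_sum_coeff]
  simp

lemma coeff_Ppoly_succ (j : ℕ) :
    (Ppoly p a).coeff (j+1) = -(if j < p then a j else 0) := by
  rw [Ppoly, coeff_sub, coeff_one, finset_sum_coeff]
  simp only [coeff_C_mul, coeff_X_pow, mul_ite, mul_one, mul_zero]
  rw [Finset.sum_congr rfl (fun m _ => if_congr (by omega : (j+1 = m+1) ↔ (m = j)) rfl rfl),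
    Finset.sum_ite_eq' (range p) j a]
  simp

lemma coeff_Qpoly (n : ℕ) : (Qpoly q b).coeff n = if n < q then b n else 0 := by
  rw [Qpoly, finset_sum_coeff]
  simp only [coeff_C_mul, coeff_X_pow, mul_ite, mul_one, mul_zero]
  rw [Finset.sum_congr rfl (fun m _ => if_congr (eq_comm : (n = m) ↔ (m = n)) rfl rfl),
    Finset.sum_ite_eq' (range q) n b]
  simp

include hp in
lemma coeff_Pc (n : ℕ) :
    (Pc p a).coeff n = (if n = p then 1 else 0) - (if n < p then ((a (p-1-n) : ℂ)) else 0) := by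
  rw [Pc, coeff_sub, coeff_X_pow, finset_sum_coeff]
  simp only [coeff_C_mul, coeff_X_pow, mul_ite, mul_one, mul_zero]
  congr 1
  by_cases hn : n < p
  · rw [if_pos hn, Finset.sum_eq_single (p-1-n)]
    · rw [if_pos (by omega)]
    · intro m hm hne
      rw [mem_range] at hm
      rw [if_neg (by omega)]
    · intro hm
      rw [mem_range] at hm
      omega
  · rw [if_neg hn]
    apply Finset.sum_eq_zero
    intro m hm
    rw [mem_range] at hm
    rw [if_neg (by omega)]

include hq in
lemma coeff_Qc (n : ℕ) :
    (Qc q b).coeff n = if n < q then ((b (q-1-n) : ℂ)) else 0 := by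
  rw [Qc, finset_sum_coeff]
  simp only [coeff_C_mul, coeff_X_pow, mul_ite, mul_one, mul_zero]
  by_cases hn : n < q
  · rw [if_pos hn, Finset.sum_eq_single (q-1-n)]
    · rw [if_pos (by omega)]
    · intro m hm hne
      rw [mem_range] at hm
      rw [if_neg (by omega)]
    · intro hm
      rw [mem_range] at hm
      omega
  · rw [if_neg hn]
    apply Finset.sum_eq_zero
    intro m hm
    rw [mem_range] at hm
    rw [if_neg (by omega)]

include hp in
lemma reflect_Pmap :
    reflect p ((Ppoly p a).map (algebraMap ℝ ℂ)) = Pc p a := by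
  ext n
  rw [coeff_reflect, coeff_map, coeff_Pc p a hp]
  by_cases hn : n ≤ p
  · rw [revAt_le hn]
    by_cases hnp : n = p
    · subst hnp
      rw [Nat.sub_self, coeff_Ppoly_zero]
      simp
    · rw [show p - n = (p - 1 - n) + 1 by omega, coeff_Ppoly_succ,
        if_pos (by omega : p - 1 - n < p), if_neg hnp, if_pos (by omega)]
      simp
  · rw [revAt_eq_self_of_lt (by omega), show n = (n-1)+1 by omega, coeff_Ppoly_succ,
      if_neg (by omega : ¬ n - 1 < p), if_neg (by omega : ¬ (n-1)+1 = p),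
      if_neg (by omega : ¬ (n-1)+1 < p)]
    simp

include hq in
lemma reflect_Qmap :
    reflect (q-1) ((Qpoly q b).map (algebraMap ℝ ℂ)) = Qc q b := by
  ext n
  rw [coeff_reflect, coeff_map, coeff_Qc q b hq, coeff_Qpoly]
  by_cases hn : n ≤ q - 1
  · rw [revAt_le hn, if_pos (by omega : q - 1 - n < q), if_pos (by omega : n < q)]
    simp
  · rw [revAt_eq_self_of_lt (by omega), if_neg (by omega : ¬ n < q), if_neg (by omega : ¬ n < q)]
    simp

lemma natDegree_Ppoly : (Ppoly p a).natDegree ≤ p := by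
  refine (natDegree_sub_le _ _).trans (max_le (by simp) ?_)
  exact natDegree_sum_le_of_forall_le _ _ fun m hm =>
    (natDegree_C_mul_X_pow_le _ _).trans (by rw [mem_range] at hm; omega)

include hq in
lemma natDegree_Qpoly : (Qpoly q b).natDegree ≤ q - 1 := by
  exact natDegree_sum_le_of_forall_le _ _ fun m hm =>
    (natDegree_C_mul_X_pow_le _ _).trans (by rw [mem_range] at hm; omega)

include hp in
set_option linter.unusedSectionVars false in
lemma degree_sumPc : ∀ c : ℕ → ℝ, (∑ k ∈ range p, C ((c k : ℂ)) * X^(p-1-k)).degree < (p : WithBot ℕ) := by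
  intro c
  refine lt_of_le_of_lt (degree_sum_le _ _) ?_
  rw [Finset.sup_lt_iff (by exact_mod_cast WithBot.bot_lt_coe p)]
  intro k hk
  refine lt_of_le_of_lt (degree_C_mul_X_pow_le _ _) ?_
  rw [mem_range] at hk
  exact_mod_cast (by omega : p - 1 - k < p)

include hp in
lemma Pc_monic : (Pc p a).Monic :=
  monic_X_pow_sub (degree_sumPc p hp a)

include hp in
lemma Pc_degree : (Pc p a).degree = (p : WithBot ℕ) := by
  rw [Pc, degree_sub_eq_left_of_degree_lt (by rw [degree_X_pow]; exact degree_sumPc p hp a),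
    degree_X_pow]

lemma eval_Pc (z : ℂ) :
    (Pc p a).eval z = z ^ p - ∑ k ∈ range p, (a k : ℂ) * z ^ (p - 1 - k) := by
  simp [Pc, eval_finset_sum]

lemma eval_Qc (z : ℂ) :
    (Qc q b).eval z = ∑ k ∈ range q, (b k : ℂ) * z ^ (q - 1 - k) := by
  simp [Qc, eval_finset_sum]


include hp hq in
lemma key (hb1 : b1 = b 0) :
    (PowerSeries.mk (hseq p q a b b1)) * (Ppoly p a : PowerSeries ℝ)
      = (Qpoly q b : PowerSeries ℝ) := by
  ext n
  rw [PowerSeries.coeff_mul, Polynomial.coeff_coe, coeff_Qpoly]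
  cases n with
  | zero =>
    rw [Finset.Nat.antidiagonal_zero]
    simp only [Finset.sum_singleton, PowerSeries.coeff_mk, Polynomial.coeff_coe,
      coeff_Ppoly_zero, mul_one]
    rw [hseq_zero p q a b b1 hp hq, if_pos hq, hb1]
  | succ k =>
    rw [Finset.Nat.sum_antidiagonal_eq_sum_range_succ_mk]
    simp only [PowerSeries.coeff_mk, Polynomial.coeff_coe]
    rw [Finset.sum_range_succ, Nat.sub_self, coeff_Ppoly_zero, mul_one]
    rw [Finset.sum_congr rfl (fun i hi => by
      rw [show k + 1 - i = (k - i) + 1 from by rw [mem_range] at hi; omega, coeff_Ppoly_succ])]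
    rw [hseq_succ p q a b b1 hp hq]
    have e1 : ∑ i ∈ range (k+1), hseq p q a b b1 i * -(if k - i < p then a (k-i) else 0)
        = ∑ i ∈ range (k+1),
            (fun m => if m < p ∧ m ≤ k then -(a m) * hseq p q a b b1 (k - m) else 0) i := by
      rw [← Finset.sum_range_reflect
        (fun m => if m < p ∧ m ≤ k then -(a m) * hseq p q a b b1 (k - m) else 0) (k+1)]
      apply Finset.sum_congr rfl
      intro i hi
      rw [mem_range] at hi
      rw [show k + 1 - 1 - i = k - i from by omega, show k - (k - i) = i from by omega]
      by_cases hkp : k - i < p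
      · rw [if_pos hkp, if_pos ⟨hkp, Nat.sub_le k i⟩]
        ring
      · rw [if_neg hkp, if_neg (fun hc => hkp hc.1)]
        ring
    rw [e1]
    have e23 : ∑ m ∈ range (k+1),
          (fun m => if m < p ∧ m ≤ k then -(a m) * hseq p q a b b1 (k - m) else 0) m
        = ∑ m ∈ range p,
          (fun m => if m < p ∧ m ≤ k then -(a m) * hseq p q a b b1 (k - m) else 0) m := by
      rw [Finset.sum_subset (Finset.range_subset_range.mpr (by omega : k + 1 ≤ k + 1 + p))
          (fun x _ hx => by
            rw [mem_range] at hx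
            rw [if_neg (by omega)]),
        Finset.sum_subset (Finset.range_subset_range.mpr (by omega : p ≤ k + 1 + p))
          (fun x _ hx => by
            rw [mem_range] at hx
            rw [if_neg (by omega)])]
    rw [e23]
    have e5 : ∑ m ∈ range p,
          (fun m => if m < p ∧ m ≤ k then -(a m) * hseq p q a b b1 (k - m) else 0) m
        = -∑ m ∈ range p, a m * (if m ≤ k then hseq p q a b b1 (k-m) else 0) := by
      rw [← Finset.sum_neg_distrib]
      apply Finset.sum_congr rfl
      intro m hm
      rw [mem_range] at hm
      simp only
      by_cases hmk : m ≤ k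
      · rw [if_pos ⟨hm, hmk⟩, if_pos hmk]
        ring
      · rw [if_neg (fun hc => hmk hc.2), if_neg hmk]
        ring
    rw [e5, if_congr (show (k+1 ≤ q-1) ↔ (k+1 < q) from by omega) rfl rfl]
    ring

end Stmt6

open Stmt6 in
/-- If `(a*_1,...,a*_p) ∈ S_p`, the polynomials `P_p(·;a*)` and `Q_q(·;b*)` have no
common complex root, `(a_1,...,a_p) ∈ S_p`, `b_1 = b*_1`, and
`e_p^T (A^k - A*^k) b* = 0` for all `k ≥ 1`, then `A = A*`. -/
theorem stmt6 (p q : ℕ) (hp : 0 < p) (hq : 0 < q)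
    (a astar b bstar : ℕ → ℝ) (hb1 : b 0 = bstar 0)
    (hSstar : memSp p astar) (hS : memSp p a)
    (hcop : ∀ z : ℂ,
      ¬ ((z ^ p - ∑ k ∈ Finset.range p, (astar k : ℂ) * z ^ (p - 1 - k) = 0) ∧
         (∑ k ∈ Finset.range q, (bstar k : ℂ) * z ^ (q - 1 - k) = 0)))
    (hk : ∀ k : ℕ, 1 ≤ k →
      (((bigA p q a b) ^ k).mulVec (bbar p q (bstar 0))) ⟨p - 1, by omega⟩
        = (((bigA p q astar bstar) ^ k).mulVec (bbar p q (bstar 0))) ⟨p - 1, by omega⟩) :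
    bigA p q a b = bigA p q astar bstar := by
  classical
  clear hS hSstar
  -- Step 1: the two output sequences agree
  have hF : PowerSeries.mk (hseq p q a b (bstar 0))
      = PowerSeries.mk (hseq p q astar bstar (bstar 0)) := by
    ext n
    rw [PowerSeries.coeff_mk, PowerSeries.coeff_mk]
    cases n with
    | zero => rw [hseq_zero p q a b _ hp hq, hseq_zero p q astar bstar _ hp hq]
    | succ m =>
      rw [hseq_eq p q a b _ hp hq, hseq_eq p q astar bstar _ hp hq]
      exact hk (m+1) (by omega)
  -- Step 2: polynomial identity over ℝ
  have hQP : Qpoly q b * Ppoly p astar = Qpoly q bstar * Ppoly p a := by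
    apply Polynomial.coe_inj.mp
    rw [Polynomial.coe_mul, Polynomial.coe_mul]
    calc ((Qpoly q b : PowerSeries ℝ)) * (Ppoly p astar : PowerSeries ℝ)
        = ((PowerSeries.mk (hseq p q a b (bstar 0))) * (Ppoly p a : PowerSeries ℝ))
            * (Ppoly p astar : PowerSeries ℝ) := by
          rw [key p q a b (bstar 0) hp hq hb1.symm]
      _ = ((PowerSeries.mk (hseq p q astar bstar (bstar 0)))
            * (Ppoly p astar : PowerSeries ℝ)) * (Ppoly p a : PowerSeries ℝ) := by
          rw [hF]; ring
      _ = ((Qpoly q bstar : PowerSeries ℝ)) * (Ppoly p a : PowerSeries ℝ) := by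
          rw [key p q astar bstar (bstar 0) hp hq rfl]
  -- Step 3: transfer to ℂ and reverse the polynomials
  have hmapQP : (Qpoly q b).map (algebraMap ℝ ℂ) * (Ppoly p astar).map (algebraMap ℝ ℂ)
      = (Qpoly q bstar).map (algebraMap ℝ ℂ) * (Ppoly p a).map (algebraMap ℝ ℂ) := by
    rw [← Polynomial.map_mul, ← Polynomial.map_mul, hQP]
  have hreflect : Qc q b * Pc p astar = Qc q bstar * Pc p a := by
    rw [← reflect_Qmap q b hq, ← reflect_Pmap p a hp, ← reflect_Pmap p astar hp,
      ← reflect_Qmap q bstar hq,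
      ← reflect_mul _ _ (natDegree_map_le.trans (natDegree_Qpoly q b hq))
        (natDegree_map_le.trans (natDegree_Ppoly p astar)),
      ← reflect_mul _ _ (natDegree_map_le.trans (natDegree_Qpoly q bstar hq))
        (natDegree_map_le.trans (natDegree_Ppoly p a)),
      hmapQP]
  -- Step 4: coprimality of Pc astar and Qc bstar
  have hcop' : ∀ z : ℂ, ¬ ((Pc p astar).eval z = 0 ∧ (Qc q bstar).eval z = 0) := by
    intro z hz
    exact hcop z ⟨by rw [← eval_Pc p astar z]; exact hz.1,
      by rw [← eval_Qc q bstar z]; exact hz.2⟩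
  have hPne : Pc p astar ≠ 0 := (Pc_monic p astar hp).ne_zero
  have hcoprime : IsCoprime (Pc p astar) (Qc q bstar) := by
    rw [← EuclideanDomain.gcd_isUnit_iff]
    by_contra hng
    have hg0 : EuclideanDomain.gcd (Pc p astar) (Qc q bstar) ≠ 0 := by
      intro h0
      exact hPne (EuclideanDomain.gcd_eq_zero_iff.mp h0).1
    obtain ⟨z, hz⟩ := Complex.exists_root (degree_pos_of_ne_zero_of_nonunit hg0 hng)
    apply hcop' z
    constructor
    · obtain ⟨c, hc⟩ := EuclideanDomain.gcd_dvd_left (Pc p astar) (Qc q bstar)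
      rw [hc, eval_mul, hz, zero_mul]
    · obtain ⟨c, hc⟩ := EuclideanDomain.gcd_dvd_right (Pc p astar) (Qc q bstar)
      rw [hc, eval_mul, hz, zero_mul]
  -- Step 5: Pc p a = Pc p astar
  have hdvd : Pc p astar ∣ Pc p a :=
    hcoprime.dvd_of_dvd_mul_right ⟨Qc q b, by linear_combination -hreflect⟩
  have hPP : Pc p a = Pc p astar := by
    obtain ⟨c, hc⟩ := hdvd
    have hc0 : c ≠ 0 := by
      rintro rfl
      rw [mul_zero] at hc
      exact (Pc_monic p a hp).ne_zero hc
    have hdeg : c.natDegree = 0 := by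
      have h1 : (Pc p a).natDegree = p := natDegree_eq_of_degree_eq_some (Pc_degree p a hp)
      have h2 : (Pc p astar).natDegree = p :=
        natDegree_eq_of_degree_eq_some (Pc_degree p astar hp)
      have h3 := natDegree_mul hPne hc0
      rw [← hc, h1, h2] at h3
      omega
    have hcC : c = C (c.coeff 0) := Polynomial.eq_C_of_natDegree_eq_zero hdeg
    have hce : c.coeff 0 = 1 := by
      have h1 : (Pc p a).leadingCoeff = 1 := (Pc_monic p a hp).leadingCoeff
      rw [hc, leadingCoeff_mul, (Pc_monic p astar hp).leadingCoeff, one_mul, hcC,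
        leadingCoeff_C] at h1
      exact h1
    rw [hc, hcC, hce, map_one, mul_one]
  -- Step 6: Qc q b = Qc q bstar
  have hQQ : Qc q b = Qc q bstar := by
    rw [hPP] at hreflect
    exact mul_right_cancel₀ hPne hreflect
  -- Step 7: extract coefficients
  have ha : ∀ k, k < p → a k = astar k := by
    intro k hkp
    have h := congrArg (fun f => Polynomial.coeff f (p-1-k)) hPP
    rw [coeff_Pc p a hp, coeff_Pc p astar hp, if_neg (by omega : ¬ p-1-k = p),
      if_pos (by omega : p-1-k < p), if_pos (by omega : p-1-k < p),
      show p - 1 - (p-1-k) = k from by omega, zero_sub, zero_sub] at h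
    exact_mod_cast neg_injective h
  have hbb : ∀ k, k < q → b k = bstar k := by
    intro k hkq
    have h := congrArg (fun f => Polynomial.coeff f (q-1-k)) hQQ
    rw [coeff_Qc q b hq, coeff_Qc q bstar hq, if_pos (by omega : q-1-k < q),
      if_pos (by omega : q-1-k < q), show q - 1 - (q-1-k) = k from by omega] at h
    exact_mod_cast h
  -- Step 8: conclude
  funext i j
  simp only [bigA]
  by_cases hi : i.val = p - 1
  · rw [if_pos hi, if_pos hi]
    by_cases hj : j.val < p
    · rw [if_pos hj, if_pos hj, ha (p - 1 - j.val) (by omega)]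
    · rw [if_neg hj, if_neg hj, hbb (q - 1 - (j.val - p)) (by omega)]
  · rw [if_neg hi, if_neg hi]
end
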